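/- Let G = (ℤ_N)^ℕ and A an ℕ×ℕ integer matrix that is upper triangular with zero main diagonal, ones on the first superdiagonal, and upper bandwidth k (i.e., a_{i,j} = 0 unless i+1 ≤ j ≤ i+k, and a_{i,i+1} = 1). Then T_A(Y) = AY is a surjective endomorphism of G with finite kernel of cardinality at most N^k. -/
import Mathlib


/-- Let `G = (ℤ_N)^ℕ` and let `A` be an integer matrix that is upper
triangular with zero main diagonal, ones on the first superdiagonal, and upper bandwidth
`k` (so `A i j = 0` unless `i+1 ≤ j ≤ i+k`, and `A i (i+1) = 1`). Then
`T_A Y = A Y` is a surjective endomorphism of `G` with finite kernel of cardinality at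
most `N^k`. -/
theorem band_matrix_epimorphism (N : ℕ) (hN : 2 ≤ N) (k : ℕ)
    (A : ℕ → ℕ → ℤ)
    (hband : ∀ i j : ℕ, A i j ≠ 0 → i + 1 ≤ j ∧ j ≤ i + k)
    (hsuper : ∀ i : ℕ, A i (i + 1) = 1) :
    Function.Surjective (fun Y : ℕ → ZMod N => fun i : ℕ => ∑ᶠ j : ℕ, A i j • Y j) ∧
      {Y : ℕ → ZMod N | (fun i : ℕ => ∑ᶠ j : ℕ, A i j • Y j) = 0}.Finite ∧
      Nat.card {Y : ℕ → ZMod N | (fun i : ℕ => ∑ᶠ j : ℕ, A i j • Y j) = 0} ≤ N ^ k := by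
  classical
  haveI : NeZero N := ⟨by omega⟩
  have hk : 1 ≤ k := by
    have := hband 0 1 (by rw [hsuper 0]; norm_num)
    omega
  -- Reduce the formal sum to a finite sum over the band
  have hIcc : ∀ (Y : ℕ → ZMod N) (i : ℕ),
      ∑ᶠ j : ℕ, A i j • Y j = ∑ j ∈ Finset.Icc (i+1) (i+k), A i j • Y j := by
    intro Y i
    apply finsum_eq_sum_of_support_subset
    intro j hj
    simp only [Function.mem_support] at hj
    have hA : A i j ≠ 0 := fun h => hj (by simp [h])
    have := hband i j hA
    simp only [Finset.coe_Icc, Set.mem_Icc]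
    omega
  have hT : ∀ (Y : ℕ → ZMod N) (i : ℕ),
      ∑ᶠ j : ℕ, A i j • Y j = Y (i+1) + ∑ j ∈ Finset.Ioc (i+1) (i+k), A i j • Y j := by
    intro Y i
    rw [hIcc, ← Finset.add_sum_erase _ _
      (show i+1 ∈ Finset.Icc (i+1) (i+k) from by simp [Finset.mem_Icc]; omega),
      Finset.Icc_erase_left, hsuper i]
    simp
  -- Surjectivity
  have surj : Function.Surjective (fun Y : ℕ → ZMod N => fun i : ℕ => ∑ᶠ j : ℕ, A i j • Y j) := by
    intro X
    have approx : ∀ b m : ℕ, ∃ Y : ℕ → ZMod N,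
        (∀ j, Y j ≠ 0 → b - m < j ∧ j ≤ b) ∧
        ∀ i, b - m < i + 1 → i + 1 ≤ b → ∑ᶠ j : ℕ, A i j • Y j = X i := by
      intro b m
      induction m with
      | zero => exact ⟨0, by simp, fun i h1 h2 => by omega⟩
      | succ m ih =>
        obtain ⟨Y, hsupp, hcon⟩ := ih
        by_cases hbm : b - m = 0
        · exact ⟨Y, fun j hj => by have := hsupp j hj; omega,
            fun i h1 h2 => hcon i (by omega) h2⟩
        · set i₀ := b - m - 1 with hi₀
          have hi₀1 : i₀ + 1 = b - m := by omega
          set Y' := Function.update Y (i₀+1)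
            (X i₀ - ∑ j ∈ Finset.Ioc (i₀+1) (i₀+k), A i₀ j • Y j) with hY'
          have hYagree : ∀ j, i₀ + 1 < j → Y' j = Y j := by
            intro j hj
            rw [hY', Function.update_of_ne (by omega)]
          refine ⟨Y', ?_, ?_⟩
          · intro j hj
            by_cases hji : j = i₀ + 1
            · omega
            · rw [hY', Function.update_of_ne hji] at hj
              have := hsupp j hj; omega
          · intro i h1 h2
            by_cases hcase : i = i₀
            · subst hcase
              rw [hT]
              have h1' : Y' (i₀+1) = X i₀ - ∑ j ∈ Finset.Ioc (i₀+1) (i₀+k), A i₀ j • Y j := by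
                rw [hY', Function.update_self]
              have hsum : ∑ j ∈ Finset.Ioc (i₀+1) (i₀+k), A i₀ j • Y' j
                  = ∑ j ∈ Finset.Ioc (i₀+1) (i₀+k), A i₀ j • Y j :=
                Finset.sum_congr rfl (fun j hj => by rw [hYagree j (Finset.mem_Ioc.1 hj).1])
              rw [h1', hsum]
              ring
            · have hlt : i₀ + 1 < i + 1 := by omega
              have hsum : ∑ j ∈ Finset.Ioc (i+1) (i+k), A i j • Y' j
                  = ∑ j ∈ Finset.Ioc (i+1) (i+k), A i j • Y j :=
                Finset.sum_congr rfl (fun j hj => by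
                  rw [hYagree j (by have := (Finset.mem_Ioc.1 hj).1; omega)])
              rw [hT, hYagree (i+1) hlt, hsum, ← hT]
              exact hcon i (by omega) h2
    have happrox : ∀ n, ∃ Y : ℕ → ZMod N, ∀ i, i < n → ∑ᶠ j : ℕ, A i j • Y j = X i := by
      intro n
      obtain ⟨Y, _, h⟩ := approx n n
      exact ⟨Y, fun i hi => h i (by omega) (by omega)⟩
    choose Yseq hYseq using happrox
    have hU : (↑(Ultrafilter.of (Filter.cofinite : Filter ℕ)) : Filter ℕ) ≤ Filter.cofinite :=
      Ultrafilter.of_le _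
    set U := Ultrafilter.of (Filter.cofinite : Filter ℕ) with hUdef
    have hval : ∀ j : ℕ, ∃ v : ZMod N, {n | Yseq n j = v} ∈ U := by
      intro j
      by_contra hc
      push_neg at hc
      have h2 : (⋂ v : ZMod N, {n | Yseq n j = v}ᶜ) ∈ (U : Filter ℕ) := by
        rw [Filter.iInter_mem]
        exact fun v => (Ultrafilter.compl_mem_iff_notMem).2 (hc v)
      obtain ⟨n, hn⟩ := Filter.nonempty_of_mem h2
      simp only [Set.mem_iInter, Set.mem_compl_iff, Set.mem_setOf_eq] at hn
      exact hn (Yseq n j) rfl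
    choose Y hY using hval
    refine ⟨Y, funext fun i => ?_⟩
    have hcof : {n : ℕ | i < n} ∈ (Filter.cofinite : Filter ℕ) := by
      rw [Filter.mem_cofinite]
      exact (Set.finite_Iic i).subset (fun n hn => by
        simp only [Set.mem_compl_iff, Set.mem_setOf_eq, not_lt] at hn
        simpa using hn)
    have hS : ({n | i < n} ∩ ⋂ j ∈ Finset.Icc (i+1) (i+k), {n | Yseq n j = Y j})
        ∈ (U : Filter ℕ) := by
      apply Filter.inter_mem (hU hcof)
      exact (Filter.biInter_mem (Finset.finite_toSet _)).2 fun j _ => hY j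
    obtain ⟨n, hn1, hn2⟩ := Filter.nonempty_of_mem hS
    simp only [Set.mem_iInter, Set.mem_setOf_eq] at hn2
    calc ∑ᶠ j, A i j • Y j
        = ∑ j ∈ Finset.Icc (i+1) (i+k), A i j • Y j := hIcc Y i
      _ = ∑ j ∈ Finset.Icc (i+1) (i+k), A i j • Yseq n j :=
          Finset.sum_congr rfl fun j hj => by rw [hn2 j hj]
      _ = ∑ᶠ j, A i j • Yseq n j := (hIcc (Yseq n) i).symm
      _ = X i := hYseq n i hn1
  -- Kernel relations
  have hrel : ∀ Y : ℕ → ZMod N, (fun i : ℕ => ∑ᶠ j : ℕ, A i j • Y j) = 0 →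
      ∀ i, Y (i+1) = -∑ j ∈ Finset.Ioc (i+1) (i+k), A i j • Y j := by
    intro Y hYK i
    have h := congrFun hYK i
    rw [hT] at h
    simp only [Pi.zero_apply] at h
    linear_combination h
  -- backward determination
  have det : ∀ Y Z : ℕ → ZMod N,
      (∀ i, Y (i+1) = -∑ j ∈ Finset.Ioc (i+1) (i+k), A i j • Y j) →
      (∀ i, Z (i+1) = -∑ j ∈ Finset.Ioc (i+1) (i+k), A i j • Z j) →
      Y 0 = Z 0 → ∀ M : ℕ, (∀ j, M < j → j < M + k → Y j = Z j) →
      ∀ j, j ≤ M → Y j = Z j := by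
    intro Y Z hYr hZr h0 M hwin
    have key : ∀ d, ∀ j, j ≤ M → M - j ≤ d → Y j = Z j := by
      intro d
      induction d using Nat.strong_induction_on with
      | _ d ih =>
        intro j hjM hd
        match j, hjM with
        | 0, _ => exact h0
        | (i+1), hjM =>
          rw [hYr i, hZr i]
          congr 1
          apply Finset.sum_congr rfl
          intro j' hj'
          simp only [Finset.mem_Ioc] at hj'
          by_cases hj'M : j' ≤ M
          · rw [ih (M - j') (by omega) j' hj'M le_rfl]
          · rw [hwin j' (by omega) (by omega)]
    exact fun j hj => key (M - j) j hj le_rfl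
  set K := {Y : ℕ → ZMod N | (fun i : ℕ => ∑ᶠ j : ℕ, A i j • Y j) = 0} with hKdef
  have bound : ∀ s : Finset (ℕ → ZMod N), ↑s ⊆ K → s.card ≤ N ^ k := by
    intro s hs
    have hDex : ∀ Y Z : ℕ → ZMod N, Y ≠ Z → ∃ j, Y j ≠ Z j := by
      intro Y Z h
      by_contra hc
      push_neg at hc
      exact h (funext hc)
    set F : (ℕ → ZMod N) × (ℕ → ZMod N) → ℕ :=
      fun p => if h : p.1 ≠ p.2 then Nat.find (hDex p.1 p.2 h) else 0 with hF
    set M := (s ×ˢ s).sup F with hM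
    have hMprop : ∀ Y ∈ s, ∀ Z ∈ s, Y ≠ Z → ∃ j ≤ M, Y j ≠ Z j := by
      intro Y hYs Z hZs hne
      refine ⟨Nat.find (hDex Y Z hne), ?_, Nat.find_spec (hDex Y Z hne)⟩
      have hle := Finset.le_sup (f := F) (b := (Y, Z)) (Finset.mem_product.2 ⟨hYs, hZs⟩)
      rw [hF] at hle
      simp only [dif_pos hne] at hle
      exact hle
    have hcard : s.card ≤ (Finset.univ : Finset (Fin k → ZMod N)).card := by
      apply Finset.card_le_card_of_injOn
        (fun Y (t : Fin k) => if (t : ℕ) = 0 then Y 0 else Y (M + t))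
        (fun _ _ => Finset.mem_univ _)
      intro Y hYs Z hZs hfYZ
      simp only [Finset.mem_coe] at hYs hZs
      have hYK : (fun i : ℕ => ∑ᶠ j : ℕ, A i j • Y j) = 0 := hs hYs
      have hZK : (fun i : ℕ => ∑ᶠ j : ℕ, A i j • Z j) = 0 := hs hZs
      have h0 : Y 0 = Z 0 := by
        have := congrFun hfYZ ⟨0, by omega⟩
        simpa using this
      have hwin : ∀ j, M < j → j < M + k → Y j = Z j := by
        intro j h1 h2
        have ht : j - M < k := by omega
        have hc := congrFun hfYZ ⟨j - M, ht⟩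
        simp only [Fin.val_mk, if_neg (show ¬ (j - M = 0) by omega)] at hc
        have hMj : M + (j - M) = j := by omega
        rwa [hMj] at hc
      have hall := det Y Z (hrel Y hYK) (hrel Z hZK) h0 M hwin
      by_contra hne
      obtain ⟨j, hjM, hj⟩ := hMprop Y hYs Z hZs hne
      exact hj (hall j hjM)
    calc s.card ≤ (Finset.univ : Finset (Fin k → ZMod N)).card := hcard
      _ = N ^ k := by
          rw [Finset.card_univ, Fintype.card_fun]
          simp [ZMod.card]
  have hfin : K.Finite := by
    by_contra hinf
    obtain ⟨t, hts, htc⟩ := Set.Infinite.exists_subset_card_eq hinf (N ^ k + 1)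
    have := bound t hts
    omega
  refine ⟨surj, hfin, ?_⟩
  rw [Nat.card_eq_card_finite_toFinset hfin]
  exact bound hfin.toFinset (by simp)
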